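/- Let m ≥ 1, n ≥ 0 be integers and x, y, ξ, η ∈ ℂ with x ≠ 0, Re(ξ/x) < 1, Im(η − ξy/x) > 0, and i(y + kx) ∉ [0,∞) for every k ∈ ℤ. Then the function η' ↦ J_{m,n}(x,y,ξ,η') is complex-differentiable at η, with derivative ∂_η J_{m,n}(x,y,ξ,η) = −2πi · J_{m−1,n}(x,y,ξ,η). -/

import Mathlib

open MeasureTheory Real Filter

/-- The polylogarithm `Li_p(w) = ∑_{j ≥ 1} w^j / j^p`, for integer index `p`. -/
noncomputable def Li (p : ℤ) (w : ℂ) : ℂ := ∑' j : ℕ, w ^ (j + 1) / ((j : ℂ) + 1) ^ p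

/-- The integrand in the definition of `J_{m,n}(x,y,ξ,η)`. -/
noncomputable def Jfun (m n : ℕ) (x y ξ η : ℂ) (s : ℝ) : ℂ :=
  (s : ℂ) ^ n *
      Li m (Complex.exp (-(2 * (π : ℂ)) * (1 - ξ / x) * s +
        2 * (π : ℂ) * Complex.I * (η - ξ * y / x))) /
    Complex.tanh ((π : ℂ) * ((s : ℂ) - Complex.I * y) / x)

/-- The function `J_{m,n}(x,y,ξ,η)`. -/
noncomputable def J (m n : ℕ) (x y ξ η : ℂ) : ℂ :=
  (-1 : ℂ) ^ (n + m + 1) * ∫ s in Set.Ioi (0 : ℝ), Jfun m n x y ξ η s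

/-- The nonnegative real axis `[0,∞)` viewed as a subset of `ℂ`. -/
def nonnegRealAxis : Set ℂ := {z : ℂ | ∃ r : ℝ, 0 ≤ r ∧ z = r}

lemma normSq_sinh' (a b : ℝ) :
    Complex.normSq (Complex.sinh (a + b * Complex.I)) = Real.sinh a ^ 2 + Real.sin b ^ 2 := by
  rw [Complex.sinh_add, Complex.sinh_mul_I, Complex.cosh_mul_I,
    ← Complex.ofReal_sinh, ← Complex.ofReal_cosh, ← Complex.ofReal_cos, ← Complex.ofReal_sin]
  rw [show (Real.sinh a : ℂ) * (Real.cos b : ℂ) + (Real.cosh a : ℂ) * ((Real.sin b : ℂ) * Complex.I)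
      = ((Real.sinh a * Real.cos b : ℝ) : ℂ) + ((Real.cosh a * Real.sin b : ℝ) : ℂ) * Complex.I by
    push_cast; ring]
  rw [Complex.normSq_add_mul_I]
  have h1 := Real.sin_sq_add_cos_sq b
  have h2 := Real.cosh_sq a
  nlinarith

lemma normSq_cosh' (a b : ℝ) :
    Complex.normSq (Complex.cosh (a + b * Complex.I)) = Real.sinh a ^ 2 + Real.cos b ^ 2 := by
  rw [Complex.cosh_add, Complex.sinh_mul_I, Complex.cosh_mul_I,
    ← Complex.ofReal_sinh, ← Complex.ofReal_cosh, ← Complex.ofReal_cos, ← Complex.ofReal_sin]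
  rw [show (Real.cosh a : ℂ) * (Real.cos b : ℂ) + (Real.sinh a : ℂ) * ((Real.sin b : ℂ) * Complex.I)
      = ((Real.cosh a * Real.cos b : ℝ) : ℂ) + ((Real.sinh a * Real.sin b : ℝ) : ℂ) * Complex.I by
    push_cast; ring]
  rw [Complex.normSq_add_mul_I]
  have h1 := Real.sin_sq_add_cos_sq b
  have h2 := Real.cosh_sq a
  nlinarith

lemma normSq_sinh (z : ℂ) :
    Complex.normSq (Complex.sinh z) = Real.sinh z.re ^ 2 + Real.sin z.im ^ 2 := by
  simpa using normSq_sinh' z.re z.im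

lemma normSq_cosh (z : ℂ) :
    Complex.normSq (Complex.cosh z) = Real.sinh z.re ^ 2 + Real.cos z.im ^ 2 := by
  simpa using normSq_cosh' z.re z.im

lemma sinh_eq_zero_iff' (z : ℂ) : Complex.sinh z = 0 ↔ ∃ k : ℤ, z = -(k * π * Complex.I) := by
  have key : Complex.sinh z = 0 ↔ Complex.sin (z * Complex.I) = 0 := by
    rw [Complex.sin_mul_I]; simp [Complex.I_ne_zero]
  rw [key, Complex.sin_eq_zero_iff]
  constructor
  · rintro ⟨k, hk⟩
    exact ⟨k, by linear_combination (-Complex.I) * hk + z * Complex.I_sq⟩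
  · rintro ⟨k, rfl⟩
    exact ⟨k, by linear_combination (-(k : ℂ)*π) * Complex.I_sq⟩

lemma cosh_eq_zero_iff' (z : ℂ) : Complex.cosh z = 0 ↔ ∃ k : ℤ, z = -((2*k+1) * π / 2 * Complex.I) := by
  have key : Complex.cosh z = 0 ↔ Complex.cos (z * Complex.I) = 0 := by
    rw [Complex.cos_mul_I]
  rw [key, Complex.cos_eq_zero_iff]
  constructor
  · rintro ⟨k, hk⟩
    exact ⟨k, by linear_combination (-Complex.I) * hk + z * Complex.I_sq⟩
  · rintro ⟨k, rfl⟩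
    exact ⟨k, by linear_combination (-(2*(k:ℂ)+1)*π/2) * Complex.I_sq⟩

lemma norm_inv_tanh_sq_le (z : ℂ) (h : Complex.sinh z ≠ 0) :
    ‖1 / Complex.tanh z‖ ^ 2 ≤ (Real.sinh z.re ^ 2 + 1) / (Real.sinh z.re ^ 2 + Real.sin z.im ^ 2) := by
  have hd : 0 < Real.sinh z.re ^ 2 + Real.sin z.im ^ 2 := by
    rw [← normSq_sinh]; exact Complex.normSq_pos.mpr h
  by_cases hc : Complex.cosh z = 0
  · rw [Complex.tanh_eq_sinh_div_cosh, hc, div_zero, div_zero, norm_zero]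
    rw [zero_pow (by norm_num)]
    exact div_nonneg (by positivity) hd.le
  · rw [Complex.tanh_eq_sinh_div_cosh, one_div, inv_div, norm_div, div_pow,
      Complex.sq_norm, Complex.sq_norm,
      normSq_cosh, normSq_sinh]
    exact (div_le_div_iff_of_pos_right hd).mpr (by nlinarith [Real.cos_sq_le_one z.im])

lemma norm_le_of_sq_le {g K : ℝ} (hg : 0 ≤ g) (h : g ^ 2 ≤ K) : g ≤ (K + 1) / 2 := by
  nlinarith [sq_nonneg (g - 1)]

lemma Li_exp_eq (p : ℤ) (z : ℂ) :
    Li p (Complex.exp z) = ∑' j : ℕ, Complex.exp (((j : ℂ) + 1) * z) / ((j : ℂ) + 1) ^ p := by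
  unfold Li
  congr 1; funext j
  rw [← Complex.exp_nat_mul]
  push_cast
  ring_nf

lemma norm_exp_term (z : ℂ) (j : ℕ) :
    ‖Complex.exp (((j : ℂ) + 1) * z)‖ = Real.exp z.re ^ (j + 1) := by
  rw [Complex.norm_exp, ← Real.exp_nat_mul]
  congr 1
  have : (((j : ℂ) + 1) * z).re = ((j : ℝ) + 1) * z.re := by
    simp [Complex.mul_re]
  rw [this]; push_cast; ring

lemma norm_term_le (m : ℕ) (z : ℂ) (j : ℕ) :
    ‖Complex.exp (((j : ℂ) + 1) * z) / ((j : ℂ) + 1) ^ (m : ℤ)‖ ≤ Real.exp z.re ^ (j + 1) := by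
  rw [norm_div, zpow_natCast, norm_pow]
  have h1 : ‖(j : ℂ) + 1‖ = (j : ℝ) + 1 := by
    rw [show ((j : ℂ) + 1) = ((j + 1 : ℕ) : ℂ) by push_cast; ring, Complex.norm_natCast]
    push_cast; ring
  rw [h1, norm_exp_term]
  have h2 : (1 : ℝ) ≤ ((j : ℝ) + 1) ^ m := one_le_pow₀ (by linarith [Nat.cast_nonneg (α := ℝ) j])
  exact div_le_self (by positivity) h2

lemma summable_geom_succ {q : ℝ} (h0 : 0 ≤ q) (h1 : q < 1) : Summable fun j : ℕ => q ^ (j + 1) := by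
  simpa [pow_succ, mul_comm] using (summable_geometric_of_lt_one h0 h1).mul_left q

lemma tsum_geom_succ {q : ℝ} (h0 : 0 ≤ q) (h1 : q < 1) :
    ∑' j : ℕ, q ^ (j + 1) = q / (1 - q) := by
  simp only [pow_succ, mul_comm (q ^ _) q]
  rw [tsum_mul_left, tsum_geometric_of_lt_one h0 h1, div_eq_mul_inv]

lemma summable_norm_term (m : ℕ) (z : ℂ) (hz : z.re < 0) :
    Summable fun j : ℕ => ‖Complex.exp (((j : ℂ) + 1) * z) / ((j : ℂ) + 1) ^ (m : ℤ)‖ := by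
  apply Summable.of_nonneg_of_le (fun j => norm_nonneg _) (fun j => norm_term_le m z j)
  exact summable_geom_succ (Real.exp_pos _).le (Real.exp_lt_one_iff.mpr hz)

lemma norm_Li_exp_le (m : ℕ) (z : ℂ) (hz : z.re < 0) :
    ‖Li (m : ℤ) (Complex.exp z)‖ ≤ Real.exp z.re / (1 - Real.exp z.re) := by
  rw [Li_exp_eq]
  refine (norm_tsum_le_tsum_norm (summable_norm_term m z hz)).trans ?_
  rw [← tsum_geom_succ (Real.exp_pos _).le (Real.exp_lt_one_iff.mpr hz)]
  exact Summable.tsum_le_tsum (norm_term_le m z) (summable_norm_term m z hz)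
    (summable_geom_succ (Real.exp_pos _).le (Real.exp_lt_one_iff.mpr hz))

lemma re_two_pi_I_mul (w : ℂ) : (2 * (π : ℂ) * Complex.I * w).re = -(2 * π) * w.im := by
  simp [Complex.mul_re, Complex.mul_im, Complex.I_re, Complex.I_im]

lemma norm_two_pi_I : ‖(2 * (π : ℂ) * Complex.I)‖ = 2 * π := by
  simp [map_mul, Complex.norm_I, Complex.norm_two,
    Complex.norm_real, _root_.abs_of_pos Real.pi_pos]

lemma hasDerivAt_Li_exp (m : ℕ) (hm : 1 ≤ m) (A η : ℂ)
    (hA : (A + 2 * (π : ℂ) * Complex.I * η).re < 0) :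
    HasDerivAt (fun η' : ℂ => Li m (Complex.exp (A + 2 * (π : ℂ) * Complex.I * η')))
      (2 * (π : ℂ) * Complex.I *
        Li ((m - 1 : ℕ) : ℤ) (Complex.exp (A + 2 * (π : ℂ) * Complex.I * η))) η := by
  have hπ := Real.pi_pos
  set t0 : ℝ := (A + 2 * (π : ℂ) * Complex.I * η).re with ht0
  set r : ℝ := -t0 / (4 * π) with hrdef
  have hr : 0 < r := div_pos (by linarith) (by positivity)
  have hre : ∀ η' ∈ Metric.ball η r, (A + 2 * (π : ℂ) * Complex.I * η').re ≤ t0 / 2 := by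
    intro η' hη'
    have h1 : A + 2 * (π : ℂ) * Complex.I * η'
        = (A + 2 * (π : ℂ) * Complex.I * η) + 2 * (π : ℂ) * Complex.I * (η' - η) := by ring
    rw [h1, Complex.add_re, re_two_pi_I_mul, ← ht0]
    have h3 : |(η' - η).im| ≤ ‖η' - η‖ := Complex.abs_im_le_norm _
    have h4 : ‖η' - η‖ < r := by
      rw [Metric.mem_ball, dist_eq_norm] at hη'; exact hη'
    have : -(η' - η).im < r := by
      have := neg_le_abs (η' - η).im; linarith
    have hr2 : 2 * π * r = -t0 / 2 := by
      rw [hrdef]; field_simp; ring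
    nlinarith
  -- the series and its term-wise derivative
  set g : ℕ → ℂ → ℂ := fun j η' =>
    Complex.exp (((j : ℂ) + 1) * (A + 2 * (π : ℂ) * Complex.I * η')) / ((j : ℂ) + 1) ^ (m : ℤ)
    with hg
  set g' : ℕ → ℂ → ℂ := fun j η' =>
    2 * (π : ℂ) * Complex.I *
      (Complex.exp (((j : ℂ) + 1) * (A + 2 * (π : ℂ) * Complex.I * η')) /
        ((j : ℂ) + 1) ^ ((m - 1 : ℕ) : ℤ)) with hg'
  have hj1 : ∀ j : ℕ, ((j : ℂ) + 1) ≠ 0 := by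
    intro j
    rw [show ((j : ℂ) + 1) = ((j + 1 : ℕ) : ℂ) by push_cast; ring]
    exact Nat.cast_ne_zero.mpr (Nat.succ_ne_zero j)
  have hpow : ∀ j : ℕ, ((j : ℂ) + 1) ^ (m : ℤ) = ((j : ℂ) + 1) ^ ((m - 1 : ℕ) : ℤ) * ((j : ℂ) + 1) := by
    intro j
    rw [zpow_natCast, zpow_natCast, ← pow_succ]
    congr 1
    omega
  have hdiff : ∀ (j : ℕ) (η' : ℂ), η' ∈ Metric.ball η r → HasDerivAt (g j) (g' j η') η' := by
    intro j η' _
    have h1 : HasDerivAt (fun z : ℂ => ((j : ℂ) + 1) * (A + 2 * (π : ℂ) * Complex.I * z))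
        (((j : ℂ) + 1) * (2 * (π : ℂ) * Complex.I)) η' := by
      simpa using (((hasDerivAt_id η').const_mul (2 * (π : ℂ) * Complex.I)).const_add A).const_mul
        ((j : ℂ) + 1)
    have h2 := (h1.cexp).div_const (((j : ℂ) + 1) ^ (m : ℤ))
    refine h2.congr_deriv (Eq.symm ?_)
    have h5 : ((j : ℂ) + 1) ^ ((m - 1 : ℕ) : ℤ) ≠ 0 := zpow_ne_zero _ (hj1 j)
    simp only [hg']
    rw [hpow j, eq_div_iff (mul_ne_zero h5 (hj1 j))]
    have h6 : Complex.exp (((j : ℂ) + 1) * (A + 2 * (π : ℂ) * Complex.I * η')) /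
        ((j : ℂ) + 1) ^ ((m - 1 : ℕ) : ℤ) * (((j : ℂ) + 1) ^ ((m - 1 : ℕ) : ℤ))
        = Complex.exp (((j : ℂ) + 1) * (A + 2 * (π : ℂ) * Complex.I * η')) :=
      div_mul_cancel₀ _ h5
    linear_combination (2 * (π : ℂ) * Complex.I * ((j : ℂ) + 1)) * h6
  set q : ℝ := Real.exp (t0 / 2) with hq
  have hq0 : 0 < q := Real.exp_pos _
  have hq1 : q < 1 := Real.exp_lt_one_iff.mpr (by linarith)
  set u : ℕ → ℝ := fun j => 2 * π * (((j : ℝ) + 1) * q ^ (j + 1)) with hu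
  have husum : Summable u := by
    apply Summable.mul_left
    have h0 := summable_pow_mul_geometric_of_norm_lt_one 1 (by rwa [Real.norm_eq_abs, abs_of_pos hq0] : ‖q‖ < 1)
    have := h0.comp_injective Nat.succ_injective
    apply this.congr
    intro j
    simp only [Function.comp_apply, pow_one, pow_succ]
    push_cast
    ring
  have hbound : ∀ (j : ℕ) (η' : ℂ), η' ∈ Metric.ball η r → ‖g' j η'‖ ≤ u j := by
    intro j η' hη'
    rw [hg', norm_mul, norm_two_pi_I, hu]
    have h1 := norm_term_le (m - 1) (A + 2 * (π : ℂ) * Complex.I * η') j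
    have h2 : Real.exp ((A + 2 * (π : ℂ) * Complex.I * η').re) ^ (j + 1) ≤ q ^ (j + 1) := by
      apply pow_le_pow_left₀ (Real.exp_pos _).le
      exact Real.exp_le_exp.mpr (hre η' hη')
    have h3 : q ^ (j + 1) ≤ ((j : ℝ) + 1) * q ^ (j + 1) := by
      nth_rewrite 1 [← one_mul (q ^ (j + 1))]
      apply mul_le_mul_of_nonneg_right _ (by positivity)
      linarith [Nat.cast_nonneg (α := ℝ) j]
    have := h1.trans (h2.trans h3)
    nlinarith [norm_nonneg (Complex.exp (((j : ℂ) + 1) * (A + 2 * (π : ℂ) * Complex.I * η')) /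
      ((j : ℂ) + 1) ^ ((m - 1 : ℕ) : ℤ))]
  have hg0 : Summable fun j => g j η := by
    apply Summable.of_norm
    have hb : ∀ j : ℕ, ‖g j η‖ ≤ q ^ (j + 1) := by
      intro j
      refine (norm_term_le m _ j).trans ?_
      exact pow_le_pow_left₀ (Real.exp_pos _).le (Real.exp_le_exp.mpr (by linarith)) _
    exact Summable.of_nonneg_of_le (fun j => norm_nonneg _) hb (summable_geom_succ hq0.le hq1)
  have key := hasDerivAt_tsum_of_isPreconnected husum Metric.isOpen_ball
    (convex_ball η r).isPreconnected hdiff hbound (Metric.mem_ball_self hr) hg0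
    (Metric.mem_ball_self hr)
  have e1 : (fun z : ℂ => ∑' j, g j z)
      = fun z => Li m (Complex.exp (A + 2 * (π : ℂ) * Complex.I * z)) := by
    funext z; exact (Li_exp_eq m _).symm
  have e2 : ∑' j, g' j η = 2 * (π : ℂ) * Complex.I *
      Li ((m - 1 : ℕ) : ℤ) (Complex.exp (A + 2 * (π : ℂ) * Complex.I * η)) := by
    rw [hg', tsum_mul_left]
    congr 1
    exact (Li_exp_eq _ _).symm
  rw [e1, e2] at key
  exact key


lemma exists_int_mul_le (a b : ℝ) (ha : a ≠ 0) : ∃ k : ℤ, (k : ℝ) * a ≤ b := by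
  rcases lt_or_gt_of_ne ha with h | h
  · refine ⟨⌈b / a⌉, ?_⟩
    have h1 : b / a ≤ (⌈b / a⌉ : ℝ) := Int.le_ceil _
    calc (⌈b / a⌉ : ℝ) * a ≤ (b / a) * a := by nlinarith
    _ = b := by field_simp
  · refine ⟨⌊b / a⌋, ?_⟩
    have h1 : (⌊b / a⌋ : ℝ) ≤ b / a := Int.floor_le _
    calc (⌊b / a⌋ : ℝ) * a ≤ (b / a) * a := by nlinarith
    _ = b := by field_simp

lemma one_le_sinh_two : (1 : ℝ) ≤ Real.sinh 2 := by
  rw [Real.sinh_eq]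
  have hE : (3 : ℝ) ≤ Real.exp 2 := by nlinarith [Real.add_one_le_exp (2 : ℝ)]
  have hEi : Real.exp (-2) * Real.exp 2 = 1 := by rw [← Real.exp_add]; norm_num
  nlinarith [Real.exp_pos (-(2:ℝ))]

lemma sinh_sq_eq_abs (u : ℝ) : Real.sinh u ^ 2 = Real.sinh |u| ^ 2 := by
  rcases abs_cases u with ⟨h1, _⟩ | ⟨h1, _⟩ <;> rw [h1]
  rw [Real.sinh_neg]; ring

lemma one_le_sinh_sq_of_two_le {u : ℝ} (h : 2 ≤ |u|) : 1 ≤ Real.sinh u ^ 2 := by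
  rw [sinh_sq_eq_abs]
  have h1 : Real.sinh 2 ≤ Real.sinh |u| := Real.sinh_le_sinh.mpr h
  nlinarith [one_le_sinh_two]

lemma sinh_arg_ne (x y : ℂ) (hx : x ≠ 0)
    (hray : ∀ k : ℤ, Complex.I * (y + (k : ℂ) * x) ∉ nonnegRealAxis) (s : ℝ) (hs : 0 ≤ s) :
    Complex.sinh ((π : ℂ) * ((s : ℂ) - Complex.I * y) / x) ≠ 0 := by
  intro h
  obtain ⟨k, hk⟩ := (sinh_eq_zero_iff' _).mp h
  apply hray (-k)
  refine ⟨s, hs, ?_⟩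
  have hπ : (π : ℂ) ≠ 0 := Complex.ofReal_ne_zero.mpr Real.pi_ne_zero
  rw [div_eq_iff hx] at hk
  have hk2 : (s : ℂ) - Complex.I * y = -((k : ℂ) * Complex.I * x) :=
    mul_left_cancel₀ hπ (by linear_combination hk)
  push_cast
  linear_combination -hk2

lemma coth_bound (x y : ℂ) (hx : x ≠ 0)
    (hray : ∀ k : ℤ, Complex.I * (y + (k : ℂ) * x) ∉ nonnegRealAxis) :
    ∃ M : ℝ, ∀ s : ℝ, 0 ≤ s → ‖1 / Complex.tanh ((π : ℂ) * ((s : ℂ) - Complex.I * y) / x)‖ ≤ M := by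
  suffices h : ∃ K : ℝ, ∀ s : ℝ, 0 ≤ s →
      ‖1 / Complex.tanh ((π : ℂ) * ((s : ℂ) - Complex.I * y) / x)‖ ^ 2 ≤ K by
    obtain ⟨K, hK⟩ := h
    exact ⟨(K + 1) / 2, fun s hs => norm_le_of_sq_le (norm_nonneg _) (hK s hs)⟩
  set w : ℂ := (π : ℂ) / x with hw
  set β : ℂ := -(w * (Complex.I * y)) with hβ
  have hπC : (π : ℂ) ≠ 0 := Complex.ofReal_ne_zero.mpr Real.pi_ne_zero
  have hwne : w ≠ 0 := div_ne_zero hπC hx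
  have hzeq : ∀ s : ℝ, (π : ℂ) * ((s : ℂ) - Complex.I * y) / x = w * s + β := by
    intro s; rw [hβ, hw]; field_simp; ring
  have hre : ∀ s : ℝ, (w * (s : ℂ) + β).re = w.re * s + β.re := by
    intro s; simp [Complex.add_re, Complex.mul_re]
  have him : ∀ s : ℝ, (w * (s : ℂ) + β).im = w.im * s + β.im := by
    intro s; simp [Complex.add_im, Complex.mul_im]
  have hmain : ∀ s : ℝ, 0 ≤ s →
      ‖1 / Complex.tanh ((π : ℂ) * ((s : ℂ) - Complex.I * y) / x)‖ ^ 2 ≤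
      (Real.sinh (w.re * s + β.re) ^ 2 + 1) /
      (Real.sinh (w.re * s + β.re) ^ 2 + Real.sin (w.im * s + β.im) ^ 2) := by
    intro s hs
    have h0 := norm_inv_tanh_sq_le (w * s + β)
      (by rw [← hzeq]; exact sinh_arg_ne x y hx hray s hs)
    rw [hre s, him s] at h0
    rw [hzeq s]
    exact h0
  have hNpos : ∀ s : ℝ, 0 ≤ s →
      0 < Real.sinh (w.re * s + β.re) ^ 2 + Real.sin (w.im * s + β.im) ^ 2 := by
    intro s hs
    have h1 := sinh_arg_ne x y hx hray s hs
    rw [hzeq s] at h1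
    have h2 : 0 < Complex.normSq (Complex.sinh (w * s + β)) := Complex.normSq_pos.mpr h1
    rw [normSq_sinh, hre s, him s] at h2
    exact h2
  rcases eq_or_ne w.re 0 with hwre | hwre
  · rcases eq_or_ne β.re 0 with hβre | hβre
    · exfalso
      have hwim : w.im ≠ 0 := fun h0 => hwne (Complex.ext hwre h0)
      have hwx : w * x = π := div_mul_cancel₀ _ hx
      have hxre : x.re = 0 := by
        have h1 : (w * x).im = 0 := by rw [hwx]; simp
        rw [Complex.mul_im, hwre] at h1
        simpa [hwim] using h1
      have hyre : y.re = 0 := by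
        have h1 : β.re = w.im * y.re := by
          rw [hβ]
          simp [Complex.mul_re, Complex.mul_im, Complex.I_re, Complex.I_im, hwre]
        rw [h1] at hβre
        exact (mul_eq_zero.mp hβre).resolve_left hwim
      have hximne : x.im ≠ 0 := fun h0 => hx (Complex.ext hxre h0)
      obtain ⟨k, hk⟩ := exists_int_mul_le x.im (-y.im) hximne
      apply hray k
      refine ⟨-(y.im + k * x.im), by linarith, ?_⟩
      apply Complex.ext <;>
        simp [Complex.mul_re, Complex.mul_im, Complex.I_re, Complex.I_im, hxre, hyre] <;> ring
    · refine ⟨(Real.sinh β.re ^ 2 + 1) / Real.sinh β.re ^ 2, fun s hs => ?_⟩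
      have hb2 : 0 < Real.sinh β.re ^ 2 := by
        have h0 : Real.sinh β.re ≠ 0 := Real.sinh_ne_zero.mpr hβre
        positivity
      refine le_trans (hmain s hs) ?_
      rw [hwre, zero_mul, zero_add]
      exact div_le_div₀ (by positivity) le_rfl hb2
        (by nlinarith [sq_nonneg (Real.sin (w.im * s + β.im))])
  · set S : ℝ := (2 + |β.re|) / |w.re| with hS
    have hS0 : 0 ≤ S := div_nonneg (by positivity) (abs_nonneg _)
    have hfc : Continuous fun s : ℝ =>
        Real.sinh (w.re * s + β.re) ^ 2 + Real.sin (w.im * s + β.im) ^ 2 := by fun_prop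
    have hgc : Continuous fun s : ℝ => Real.sinh (w.re * s + β.re) ^ 2 + 1 := by fun_prop
    obtain ⟨s₁, hs₁, hmin⟩ :=
      isCompact_Icc.exists_isMinOn (Set.nonempty_Icc.mpr hS0) hfc.continuousOn
    obtain ⟨s₂, hs₂, hmax⟩ :=
      isCompact_Icc.exists_isMaxOn (Set.nonempty_Icc.mpr hS0) hgc.continuousOn
    have hcpos : 0 < Real.sinh (w.re * s₁ + β.re) ^ 2 + Real.sin (w.im * s₁ + β.im) ^ 2 :=
      hNpos s₁ hs₁.1
    refine ⟨max 2 ((Real.sinh (w.re * s₂ + β.re) ^ 2 + 1) /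
      (Real.sinh (w.re * s₁ + β.re) ^ 2 + Real.sin (w.im * s₁ + β.im) ^ 2)), fun s hs => ?_⟩
    rcases le_total s S with hsS | hsS
    · refine le_trans (hmain s hs) (le_trans ?_ (le_max_right _ _))
      have h1 : Real.sinh (w.re * s + β.re) ^ 2 + 1
          ≤ Real.sinh (w.re * s₂ + β.re) ^ 2 + 1 := hmax (Set.mem_Icc.mpr ⟨hs, hsS⟩)
      have h2 : Real.sinh (w.re * s₁ + β.re) ^ 2 + Real.sin (w.im * s₁ + β.im) ^ 2
          ≤ Real.sinh (w.re * s + β.re) ^ 2 + Real.sin (w.im * s + β.im) ^ 2 :=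
        hmin (Set.mem_Icc.mpr ⟨hs, hsS⟩)
      exact div_le_div₀ (by positivity) h1 hcpos h2
    · refine le_trans (hmain s hs) (le_trans ?_ (le_max_left _ _))
      have habs : 2 ≤ |w.re * s + β.re| := by
        have e1 : |w.re| * S = 2 + |β.re| := by
          rw [hS]; field_simp
        have e2 : |w.re| * S ≤ |w.re| * s :=
          mul_le_mul_of_nonneg_left hsS (abs_nonneg _)
        have e3 : |w.re * s| = |w.re| * s := by
          rw [abs_mul, abs_of_nonneg hs]
        have e4 : |w.re * s| ≤ |w.re * s + β.re| + |β.re| := by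
          have h5 := abs_add_le (w.re * s + β.re) (-β.re)
          simpa using h5
        linarith
      have h1 : 1 ≤ Real.sinh (w.re * s + β.re) ^ 2 := one_le_sinh_sq_of_two_le habs
      rw [div_le_iff₀ (hNpos s hs)]
      nlinarith [sq_nonneg (Real.sin (w.im * s + β.im))]



lemma continuousOn_Li_exp (m : ℕ) (c1 c2 : ℂ) (h1 : c1.re ≤ 0) (h2 : c2.re < 0) :
    ContinuousOn (fun s : ℝ => Li m (Complex.exp (c1 * s + c2))) (Set.Ici 0) := by
  simp only [Li_exp_eq]
  apply continuousOn_tsum (u := fun j : ℕ => Real.exp c2.re ^ (j + 1))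
  · intro j
    apply Continuous.continuousOn
    fun_prop
  · exact summable_geom_succ (Real.exp_pos _).le (Real.exp_lt_one_iff.mpr h2)
  · intro j s hs
    refine (norm_term_le m _ j).trans ?_
    apply pow_le_pow_left₀ (Real.exp_pos _).le
    apply Real.exp_le_exp.mpr
    have : (c1 * (s : ℂ) + c2).re = c1.re * s + c2.re := by
      simp [Complex.add_re, Complex.mul_re]
    rw [this]
    nlinarith [Set.mem_Ici.mp hs]

lemma Jfun_eq_cosh_sinh (m n : ℕ) (x y ξ η' : ℂ) (s : ℝ) :
    Jfun m n x y ξ η' s =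
      (s : ℂ) ^ n *
        Li m (Complex.exp (-(2 * (π : ℂ)) * (1 - ξ / x) * s +
          2 * (π : ℂ) * Complex.I * (η' - ξ * y / x))) *
      (Complex.cosh ((π : ℂ) * ((s : ℂ) - Complex.I * y) / x) /
        Complex.sinh ((π : ℂ) * ((s : ℂ) - Complex.I * y) / x)) := by
  unfold Jfun
  rw [Complex.tanh_eq_sinh_div_cosh, div_div_eq_mul_div, mul_div_assoc]

lemma Jfun_continuousOn (m n : ℕ) (x y ξ η' : ℂ) (hx : x ≠ 0) (hξ : (ξ / x).re < 1)
    (hη' : 0 < (η' - ξ * y / x).im)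
    (hray : ∀ k : ℤ, Complex.I * (y + (k : ℂ) * x) ∉ nonnegRealAxis) :
    ContinuousOn (fun s : ℝ => Jfun m n x y ξ η' s) (Set.Ici 0) := by
  simp only [Jfun_eq_cosh_sinh]
  apply ContinuousOn.mul
  · apply ContinuousOn.mul
    · exact (Complex.continuous_ofReal.pow n).continuousOn
    · apply continuousOn_Li_exp
      · have : (-(2 * (π : ℂ)) * (1 - ξ / x)).re = -(2 * π) * (1 - (ξ / x).re) := by
          rw [show -(2 * (π : ℂ)) = ((-(2 * π) : ℝ) : ℂ) by push_cast; ring,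
            Complex.re_ofReal_mul, Complex.sub_re, Complex.one_re]
        rw [this]
        nlinarith [Real.pi_pos]
      · rw [re_two_pi_I_mul]
        nlinarith [Real.pi_pos]
  · apply ContinuousOn.div
    · apply Continuous.continuousOn; fun_prop
    · apply Continuous.continuousOn; fun_prop
    · intro s hs
      exact sinh_arg_ne x y hx hray s hs

lemma re_E (ξx w : ℂ) (s : ℝ) :
    ((-(2 * (π : ℂ)) * (1 - ξx) * s + 2 * (π : ℂ) * Complex.I * w).re)
      = -(2 * π) * (1 - ξx.re) * s - 2 * π * w.im := by
  rw [Complex.add_re, re_two_pi_I_mul]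
  have h : (-(2 * (π : ℂ)) * (1 - ξx) * (s : ℂ)).re = -(2 * π) * (1 - ξx.re) * s := by
    rw [show -(2 * (π : ℂ)) * (1 - ξx) * (s : ℂ) = ((s : ℝ) : ℂ) * (-(2 * (π : ℂ)) * (1 - ξx))
        by ring, Complex.re_ofReal_mul,
      show -(2 * (π : ℂ)) = ((-(2 * π) : ℝ) : ℂ) by push_cast; ring,
      Complex.re_ofReal_mul, Complex.sub_re, Complex.one_re]
    ring
  rw [h]
  ring

lemma Jfun_norm_le (m n : ℕ) (x y ξ η' : ℂ) (hξ : (ξ / x).re < 1)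
    {δ : ℝ} (hδ : 0 < δ) (hδ' : δ ≤ (η' - ξ * y / x).im)
    {M : ℝ} (hM : ∀ s : ℝ, 0 ≤ s →
      ‖1 / Complex.tanh ((π : ℂ) * ((s : ℂ) - Complex.I * y) / x)‖ ≤ M)
    (s : ℝ) (hs : 0 ≤ s) :
    ‖Jfun m n x y ξ η' s‖ ≤
      M * (Real.exp (-(2 * π * δ)) / (1 - Real.exp (-(2 * π * δ)))) *
        (s ^ n * Real.exp (-(2 * π * (1 - (ξ / x).re)) * s)) := by
  have hπ := Real.pi_pos
  have hM0 : 0 ≤ M := le_trans (norm_nonneg _) (hM 0 le_rfl)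
  set z : ℂ := -(2 * (π : ℂ)) * (1 - ξ / x) * s + 2 * (π : ℂ) * Complex.I * (η' - ξ * y / x)
    with hz
  have hzre : z.re = -(2 * π) * (1 - (ξ / x).re) * s - 2 * π * (η' - ξ * y / x).im := re_E _ _ s
  have hzre_le : z.re ≤ -(2 * π * (1 - (ξ / x).re)) * s + -(2 * π * δ) := by
    rw [hzre]
    have h1 : 2 * π * δ ≤ 2 * π * (η' - ξ * y / x).im := by nlinarith
    nlinarith
  have hzre_neg : z.re < 0 := lt_of_le_of_lt hzre_le (by nlinarith [mul_nonneg (mul_nonneg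
    (by nlinarith : (0:ℝ) ≤ 2 * π) (by nlinarith : (0:ℝ) ≤ 1 - (ξ/x).re)) hs])
  have hq1 : Real.exp (-(2 * π * δ)) < 1 := Real.exp_lt_one_iff.mpr (by nlinarith)
  have hq0 : 0 < Real.exp (-(2 * π * δ)) := Real.exp_pos _
  -- norm of Jfun as a product
  have h1 : ‖Jfun m n x y ξ η' s‖ = s ^ n * ‖Li m (Complex.exp z)‖ *
      ‖1 / Complex.tanh ((π : ℂ) * ((s : ℂ) - Complex.I * y) / x)‖ := by
    unfold Jfun
    rw [div_eq_mul_one_div, norm_mul, norm_mul, norm_pow, Complex.norm_real,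
      Real.norm_eq_abs, abs_of_nonneg hs, ← hz]
  rw [h1]
  have h2 : ‖Li m (Complex.exp z)‖ ≤ Real.exp z.re / (1 - Real.exp z.re) :=
    norm_Li_exp_le m z hzre_neg
  have h3 : Real.exp z.re / (1 - Real.exp z.re) ≤
      Real.exp (-(2 * π * (1 - (ξ / x).re)) * s) * Real.exp (-(2 * π * δ)) /
        (1 - Real.exp (-(2 * π * δ))) := by
    rw [← Real.exp_add]
    apply div_le_div₀ (by positivity) (Real.exp_le_exp.mpr hzre_le) (by linarith)
    have h4 : z.re ≤ -(2 * π * δ) := by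
      refine hzre_le.trans ?_
      nlinarith [mul_nonneg (mul_nonneg (by nlinarith : (0:ℝ) ≤ 2 * π)
        (by nlinarith : (0:ℝ) ≤ 1 - (ξ/x).re)) hs]
    have := Real.exp_le_exp.mpr h4
    linarith
  calc s ^ n * ‖Li m (Complex.exp z)‖ * ‖1 / Complex.tanh ((π:ℂ) * ((s:ℂ) - Complex.I*y) / x)‖
      ≤ s ^ n * (Real.exp (-(2 * π * (1 - (ξ / x).re)) * s) * Real.exp (-(2 * π * δ)) /
          (1 - Real.exp (-(2 * π * δ)))) * M := by
        apply mul_le_mul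
        · exact mul_le_mul_of_nonneg_left (h2.trans h3) (by positivity)
        · exact hM s hs
        · exact norm_nonneg _
        · exact mul_nonneg (pow_nonneg hs n) (div_nonneg (by positivity) (by linarith))
    _ = M * (Real.exp (-(2 * π * δ)) / (1 - Real.exp (-(2 * π * δ)))) *
        (s ^ n * Real.exp (-(2 * π * (1 - (ξ / x).re)) * s)) := by ring

lemma integrable_majorant (C a : ℝ) (ha : 0 < a) (n : ℕ) :
    IntegrableOn (fun s : ℝ => C * (s ^ n * Real.exp (-a * s))) (Set.Ioi 0) := by
  apply Integrable.const_mul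
  apply integrable_of_isBigO_exp_neg (half_pos ha) (by fun_prop : Continuous
    fun s : ℝ => s ^ n * Real.exp (-a * s)).continuousOn
  have h1 := tendsto_rpow_mul_exp_neg_mul_atTop_nhds_zero n (a / 2) (half_pos ha)
  simp only [Real.rpow_natCast] at h1
  have h2 : (fun s : ℝ => s ^ n * Real.exp (-a * s))
      = fun s => (s ^ n * Real.exp (-(a / 2) * s)) * Real.exp (-(a / 2) * s) := by
    funext s
    rw [mul_assoc, ← Real.exp_add]
    ring_nf
  rw [h2]
  exact (h1.isBigO_one ℝ).mul (Asymptotics.isBigO_refl _ _) |>.trans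
    (by simpa using Asymptotics.isBigO_refl (fun s : ℝ => Real.exp (-(a / 2) * s)) atTop)

lemma Jfun_hasDerivAt (m n : ℕ) (hm : 1 ≤ m) (x y ξ η' : ℂ) (s : ℝ) (hs : 0 ≤ s)
    (hξ : (ξ / x).re < 1) (hη' : 0 < (η' - ξ * y / x).im) :
    HasDerivAt (fun t : ℂ => Jfun m n x y ξ t s)
      (2 * (π : ℂ) * Complex.I * Jfun (m - 1) n x y ξ η' s) η' := by
  have hπ := Real.pi_pos
  set A : ℂ := -(2 * (π : ℂ)) * (1 - ξ / x) * s - 2 * (π : ℂ) * Complex.I * (ξ * y / x) with hA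
  have harg : ∀ t : ℂ, -(2 * (π : ℂ)) * (1 - ξ / x) * s
      + 2 * (π : ℂ) * Complex.I * (t - ξ * y / x) = A + 2 * (π : ℂ) * Complex.I * t := by
    intro t; rw [hA]; ring
  have hAre : (A + 2 * (π : ℂ) * Complex.I * η').re < 0 := by
    rw [← harg η', re_E]
    have h1 : 0 < 2 * π * (η' - ξ * y / x).im := by positivity
    nlinarith [mul_nonneg (mul_nonneg (by nlinarith : (0:ℝ) ≤ 2 * π)
      (by nlinarith : (0:ℝ) ≤ 1 - (ξ / x).re)) hs]
  have hL := hasDerivAt_Li_exp m hm A η' hAre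
  have h2 := (hL.const_mul ((s : ℂ) ^ n)).div_const
    (Complex.tanh ((π : ℂ) * ((s : ℂ) - Complex.I * y) / x))
  have e1 : (fun t : ℂ => Jfun m n x y ξ t s)
      = fun t => ((s : ℂ) ^ n * Li m (Complex.exp (A + 2 * (π : ℂ) * Complex.I * t))) /
        Complex.tanh ((π : ℂ) * ((s : ℂ) - Complex.I * y) / x) := by
    funext t; unfold Jfun; rw [harg t]
  rw [e1]
  refine h2.congr_deriv (Eq.symm ?_)
  unfold Jfun
  rw [harg η']
  ring

theorem stmt2 (m n : ℕ) (hm : 1 ≤ m) (x y ξ η : ℂ) (hx : x ≠ 0)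
    (hξ : (ξ / x).re < 1) (hη : 0 < (η - ξ * y / x).im)
    (hray : ∀ k : ℤ, Complex.I * (y + (k : ℂ) * x) ∉ nonnegRealAxis) :
    HasDerivAt (fun η' : ℂ => J m n x y ξ η')
      (-(2 * (π : ℂ) * Complex.I) * J (m - 1) n x y ξ η) η := by
  have hπ := Real.pi_pos
  obtain ⟨M, hM⟩ := coth_bound x y hx hray
  have hM0 : 0 ≤ M := le_trans (norm_nonneg _) (hM 0 le_rfl)
  set h : ℝ := (η - ξ * y / x).im with hh
  have hh0 : 0 < h := hη
  have hε : 0 < h / 2 := by positivity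
  have him' : ∀ η' ∈ Metric.ball η (h / 2), h / 2 ≤ (η' - ξ * y / x).im := by
    intro η' hb
    have h1 : (η' - ξ * y / x).im = h + (η' - η).im := by
      rw [hh]; simp [Complex.sub_im]
    have h2 : |(η' - η).im| ≤ ‖η' - η‖ := Complex.abs_im_le_norm _
    have h3 : ‖η' - η‖ < h / 2 := by rwa [Metric.mem_ball, dist_eq_norm] at hb
    have h4 := neg_abs_le (η' - η).im
    rw [h1]; linarith
  have himpos : ∀ η' ∈ Metric.ball η (h / 2), 0 < (η' - ξ * y / x).im := by
    intro η' hb; linarith [him' η' hb]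
  have ha0 : 0 < 2 * π * (1 - (ξ / x).re) := by nlinarith
  -- measurability for η' near η
  have hmeas : ∀ η' : ℂ, 0 < (η' - ξ * y / x).im → ∀ k : ℕ,
      AEStronglyMeasurable (fun s : ℝ => Jfun k n x y ξ η' s) (volume.restrict (Set.Ioi 0)) := by
    intro η' hpos k
    exact ((Jfun_continuousOn k n x y ξ η' hx hξ hpos hray).mono
      (Set.Ioi_subset_Ici le_rfl)).aestronglyMeasurable measurableSet_Ioi
  have key := hasDerivAt_integral_of_dominated_loc_of_deriv_le (s := Metric.ball η (h / 2))
    (F := fun η' s => Jfun m n x y ξ η' s)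
    (F' := fun η' s => 2 * (π : ℂ) * Complex.I * Jfun (m - 1) n x y ξ η' s)
    (μ := volume.restrict (Set.Ioi 0)) (x₀ := η)
    (bound := fun s => (2 * π * (M * (Real.exp (-(2 * π * (h / 2))) /
      (1 - Real.exp (-(2 * π * (h / 2))))))) *
      (s ^ n * Real.exp (-(2 * π * (1 - (ξ / x).re)) * s)))
    (Metric.ball_mem_nhds η hε)
    (Filter.eventually_of_mem (Metric.ball_mem_nhds η hε)
      (fun η' hb => hmeas η' (himpos η' hb) m))
    ?_ ?_ ?_ ?_ ?_
  · -- conclude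
    have hfinal := (key.2).const_mul ((-1 : ℂ) ^ (n + m + 1))
    have e2 : ∫ s in Set.Ioi (0:ℝ), 2 * (π : ℂ) * Complex.I * Jfun (m - 1) n x y ξ η s
        = 2 * (π : ℂ) * Complex.I * ∫ s in Set.Ioi (0:ℝ), Jfun (m - 1) n x y ξ η s :=
      integral_const_mul _ _
    rw [e2] at hfinal
    have hpow : ((-1 : ℂ)) ^ (n + m + 1) = -(-1 : ℂ) ^ (n + (m - 1) + 1) := by
      have he : n + m + 1 = (n + (m - 1) + 1) + 1 := by omega
      rw [he, pow_succ]; ring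
    unfold J
    refine hfinal.congr_deriv (Eq.symm ?_)
    rw [hpow]
    ring
  · -- integrability of F at η
    apply Integrable.mono' (integrable_majorant (M * (Real.exp (-(2 * π * (h / 2))) /
      (1 - Real.exp (-(2 * π * (h / 2)))))) _ ha0 n) (hmeas η hη m)
    filter_upwards [ae_restrict_mem measurableSet_Ioi] with s hs
    exact Jfun_norm_le m n x y ξ η hξ hε (by rw [← hh]; linarith) hM s (le_of_lt hs)
  · -- measurability of F' at η
    exact (hmeas η hη (m - 1)).const_mul _
  · -- bound
    filter_upwards [ae_restrict_mem measurableSet_Ioi] with s hs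
    intro η' hb
    rw [norm_mul, norm_two_pi_I]
    have hle := Jfun_norm_le (m - 1) n x y ξ η' hξ hε (him' η' hb) hM s (le_of_lt hs)
    have h5 := mul_le_mul_of_nonneg_left hle (by positivity : (0:ℝ) ≤ 2 * π)
    exact le_trans h5 (le_of_eq (by ring))
  · -- integrability of bound
    exact integrable_majorant _ _ ha0 n
  · -- differentiability
    filter_upwards [ae_restrict_mem measurableSet_Ioi] with s hs
    intro η' hb
    exact Jfun_hasDerivAt m n hm x y ξ η' s (le_of_lt hs) hξ (himpos η' hb)
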